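/- For all m ≥ 1, 2·∑_{i=1}^{m} k_i = t_{m-2} + t_{m-3} + m, where t is the Tribonacci number sequence (with t_{-2}=0, t_{-1}=t_0=1). -/

import Mathlib

/-- Tribonacci numbers, index-shifted so that `trib n` represents t_{n-2}:
`trib 0 = t₋₂ = 0`, `trib 1 = t₋₁ = 1`, `trib 2 = t₀ = 1`, and
`trib (n+3) = trib (n+2) + trib (n+1) + trib n`. -/
def trib : ℕ → ℕ
  | 0 => 0
  | 1 => 1
  | 2 => 1
  | n + 3 => trib (n + 2) + trib (n + 1) + trib n

/-- Kernel numbers: k₀ = 0, k₁ = k₂ = 1, k_m = k_{m-1} + k_{m-2} + k_{m-3} - 1 for m ≥ 3. -/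
def ker : ℕ → ℕ
  | 0 => 0
  | 1 => 1
  | 2 => 1
  | n + 3 => ker (n + 2) + ker (n + 1) + ker n - 1

lemma ker_pos : ∀ n, 1 ≤ ker (n + 1)
  | 0 => by simp [ker]
  | 1 => by simp [ker]
  | 2 => by
      have h0 := ker_pos 0
      have h1 := ker_pos 1
      simp only [ker] at *
      omega
  | n + 3 => by
      have h0 := ker_pos n
      have h1 := ker_pos (n + 1)
      have h2 := ker_pos (n + 2)
      simp only [ker] at *
      omega

lemma aux_trib_ker : ∀ n, trib (n + 2) + 1 = 2 * ker (n + 2) + trib n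
  | 0 => by simp [trib, ker]
  | 1 => by simp [trib, ker]
  | 2 => by simp [trib, ker]
  | n + 3 => by
      have h1 : trib (n + 2) + 1 = 2 * ker (n + 2) + trib n := aux_trib_ker n
      have h2 : trib (n + 3) + 1 = 2 * ker (n + 3) + trib (n + 1) := aux_trib_ker (n + 1)
      have h3 : trib (n + 4) + 1 = 2 * ker (n + 4) + trib (n + 2) := aux_trib_ker (n + 2)
      have hp : 1 ≤ ker (n + 2) := ker_pos (n + 1)
      have hp2 : 1 ≤ ker (n + 3) := ker_pos (n + 2)
      have hp3 : 1 ≤ ker (n + 4) := ker_pos (n + 3)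
      show trib (n + 5) + 1 = 2 * ker (n + 5) + trib (n + 3)
      have e1 : trib (n + 5) = trib (n + 4) + trib (n + 3) + trib (n + 2) := rfl
      have e2 : trib (n + 4) = trib (n + 3) + trib (n + 2) + trib (n + 1) := rfl
      have e3 : trib (n + 3) = trib (n + 2) + trib (n + 1) + trib n := rfl
      have f1 : ker (n + 5) = ker (n + 4) + ker (n + 3) + ker (n + 2) - 1 := rfl
      have f2 : ker (n + 4) = ker (n + 3) + ker (n + 2) + ker (n + 1) - 1 := rfl
      have f3 : ker (n + 3) = ker (n + 2) + ker (n + 1) + ker n - 1 := rfl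
      omega

/-- For all m ≥ 1, 2·∑_{i=1}^{m} k_i = t_{m-2} + t_{m-3} + m.
(Here `trib m` = t_{m-2} and `trib (m-1)` = t_{m-3}.) -/
theorem two_mul_sum_ker_eq_trib (m : ℕ) (hm : 1 ≤ m) :
    2 * ∑ i ∈ Finset.Icc 1 m, ker i = trib m + trib (m - 1) + m := by
  induction m with
  | zero => omega
  | succ n ih =>
    rcases Nat.eq_or_lt_of_le hm with h | h
    · simp [← h, trib, ker]
    · have hn : 1 ≤ n := by omega
      rw [Finset.sum_Icc_succ_top (by omega : 1 ≤ n + 1), Nat.mul_add, ih hn]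
      have hm1 : n - 1 + 2 = n + 1 := by omega
      have := aux_trib_ker (n - 1)
      rw [hm1] at this
      simp only [Nat.add_sub_cancel]
      omega
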